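/- For the ε-perturbed family of paths of the two-layer system, the path integral ∫₀¹ Φ_{h₁} ∂_s Φ_{h₂} ds equals [ (h₁ˡ)²(3+4ε) + 2(3+2ε)h₁ˡh₁ʳ + (3+4ε)(h₁ʳ)² ] · (h₂ʳ - h₂ˡ) / (6(1+ε)(h₁ʳ + h₁ˡ)), and for ε = 0 this reduces to ((h₁ˡ + h₁ʳ)/2)(h₂ʳ - h₂ˡ), the value for the family of segments. -/

import Mathlib

/-- For the ε-perturbed family of paths of the two-layer system, the path
integral `∫ Φ_{h₁} ∂_s Φ_{h₂} ds`, computed as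
`∫_{h₁ˡ}^{h₁ʳ} h₁ (dh₂/dh₁) dh₁`, equals the stated rational expression, and
for `ε = 0` that expression reduces to `((h₁ˡ + h₁ʳ)/2)(h₂ʳ - h₂ˡ)`. -/
theorem perturbed_path_integral (h1l h1r h2l h2r ε : ℝ)
    (hne : h1l ≠ h1r) (hsum : h1l + h1r ≠ 0) (hε : -1 < ε) :
    (∫ x in h1l..h1r,
        x * ((1 / (h1r - h1l) + ε * (2 * x) / (h1r^2 - h1l^2)) *
          (h2r - h2l) / (1 + ε)))
      = (h1l^2 * (3 + 4*ε) + 2*(3 + 2*ε)*h1l*h1r + (3 + 4*ε)*h1r^2) *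
          (h2r - h2l) / (6 * (1 + ε) * (h1r + h1l)) ∧
    (h1l^2 * (3 + 4*0) + 2*(3 + 2*0)*h1l*h1r + (3 + 4*0)*h1r^2) *
        (h2r - h2l) / (6 * (1 + 0) * (h1r + h1l))
      = ((h1l + h1r) / 2) * (h2r - h2l) := by
  have hd : h1r - h1l ≠ 0 := sub_ne_zero.mpr (Ne.symm hne)
  have hsq : h1r ^ 2 - h1l ^ 2 ≠ 0 := by
    have : h1r ^ 2 - h1l ^ 2 = (h1r - h1l) * (h1l + h1r) := by ring
    rw [this]; exact mul_ne_zero hd hsum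
  have hε' : (1 : ℝ) + ε ≠ 0 := by linarith
  have hsum' : h1r + h1l ≠ 0 := by rwa [add_comm]
  constructor
  · have key : (∫ x in h1l..h1r,
        x * ((1 / (h1r - h1l) + ε * (2 * x) / (h1r^2 - h1l^2)) *
          (h2r - h2l) / (1 + ε)))
      = (∫ x in h1l..h1r,
          ((h2r - h2l) / (1 + ε) / (h1r - h1l)) * x ^ 1
          + (2 * ε * (h2r - h2l) / (1 + ε) / (h1r ^ 2 - h1l ^ 2)) * x ^ 2) := by
      apply intervalIntegral.integral_congr
      intro x _
      field_simp
    rw [key, intervalIntegral.integral_add]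
    · rw [intervalIntegral.integral_const_mul, intervalIntegral.integral_const_mul,
        integral_pow, integral_pow]
      rw [eq_div_iff (mul_ne_zero (mul_ne_zero (by norm_num) hε') hsum')]
      field_simp
      ring
    · exact (intervalIntegral.intervalIntegrable_pow 1).const_mul _
    · exact (intervalIntegral.intervalIntegrable_pow 2).const_mul _
  · rw [div_eq_iff (by norm_num; exact hsum')]
    ring
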